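/- Let K ⊆ ℝ/ℤ be a non-empty compact set with E_d(K) = K and the non-wandering property. Then K is contained in a flower for E_d if and only if every critical value of K is regular (K is Sturmian-like). -/

import Mathlib

/-- The expanding map `E_d(x) = d x mod 1` on the circle. -/
noncomputable def Ed (d : ℕ) : UnitAddCircle → UnitAddCircle := fun x => d • x

/-- `η` is a preimage selector for `E_d`: it selects a `d`-th preimage of every point and
has only finitely many discontinuities. -/
def IsPreimageSelector (d : ℕ) (η : UnitAddCircle → UnitAddCircle) : Prop :=
  (∀ x, Ed d (η x) = x) ∧ {x | ¬ ContinuousAt η x}.Finite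


/-- The set of critical values of `K`: points of `K` with more than one `E_d`-preimage in `K`. -/
def critVals (d : ℕ) (K : Set UnitAddCircle) : Set UnitAddCircle :=
  {x | x ∈ K ∧ ∃ y ∈ K, ∃ z ∈ K, y ≠ z ∧ Ed d y = x ∧ Ed d z = x}

/-- `K` has the non-wandering property: every point of `K` is non-wandering for `E_d|_K`. -/
def NonWanderingOn (d : ℕ) (K : Set UnitAddCircle) : Prop :=
  ∀ x ∈ K, ∀ ε : ℝ, 0 < ε →
    ∃ y ∈ K, ∃ n : ℕ, 0 < n ∧ dist x y < ε ∧ dist x ((Ed d)^[n] y) < ε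

/-- A one-sided arc at `x`: the image of `x + t` for `t` ranging over a set of reals. -/
def sideArc (x : UnitAddCircle) (s : Set ℝ) : Set UnitAddCircle :=
  (fun t : ℝ => x + (t : UnitAddCircle)) '' s

/-- A critical value `x` of `K` is regular: on each one-sided punctured neighborhood of `x`
there is a continuous inverse branch of `E_d` selecting, for points of `K`, the unique
`E_d`-preimage lying in `K`. -/
def IsRegularCrit (d : ℕ) (K : Set UnitAddCircle) (x : UnitAddCircle) : Prop :=
  x ∈ critVals d K ∧
  ∃ ε : ℝ, 0 < ε ∧ ε < 1 / 2 ∧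
    ∃ ηm ηp : UnitAddCircle → UnitAddCircle,
      ContinuousOn ηm (sideArc x (Set.Ioo (-ε) 0)) ∧
      ContinuousOn ηp (sideArc x (Set.Ioo 0 ε)) ∧
      (∀ z ∈ sideArc x (Set.Ioo (-ε) 0),
        Ed d (ηm z) = z ∧ (z ∈ K → {w : UnitAddCircle | Ed d w = z} ∩ K = {ηm z})) ∧
      (∀ z ∈ sideArc x (Set.Ioo 0 ε),
        Ed d (ηp z) = z ∧ (z ∈ K → {w : UnitAddCircle | Ed d w = z} ∩ K = {ηp z}))

open Set

namespace S6

lemma ed_coe (d : ℕ) (t : ℝ) : Ed d (t : UnitAddCircle) = ((d * t : ℝ) : UnitAddCircle) := by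
  show d • ((t : ℝ) : UnitAddCircle) = _
  rw [← AddCircle.coe_nsmul]
  norm_num

lemma continuous_Ed (d : ℕ) : Continuous (Ed d) := continuous_nsmul _

lemma coe_int_zero (m : ℤ) : ((m : ℝ) : UnitAddCircle) = 0 := by
  rw [AddCircle.coe_eq_zero_iff]
  exact ⟨m, by simp⟩

lemma coe_eq_coe (a b : ℝ) : (a : UnitAddCircle) = (b : UnitAddCircle) ↔ ∃ m : ℤ, a - b = m := by
  constructor
  · intro h
    have : ((a - b : ℝ) : UnitAddCircle) = 0 := by
      rw [AddCircle.coe_sub, h]; abel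
    rw [AddCircle.coe_eq_zero_iff] at this
    obtain ⟨n, hn⟩ := this
    exact ⟨n, by simpa using hn.symm⟩
  · rintro ⟨m, hm⟩
    have : a = b + (m : ℝ) := by linarith [hm]
    rw [this, AddCircle.coe_add, coe_int_zero, add_zero]

lemma norm_coe_of_le_half (t : ℝ) (h : |t| ≤ 1/2) : ‖(t : UnitAddCircle)‖ = |t| := by
  rw [UnitAddCircle.norm_eq]
  have h' := abs_le.1 h
  rcases eq_or_lt_of_le h'.2 with h2 | h2
  · subst h2
    rw [round_eq]
    norm_num
  · have : round t = 0 := by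
      rw [round_eq_zero_iff]
      exact ⟨h'.1, h2⟩
    simp [this]

lemma dist_coe (a b : ℝ) (h : |a - b| ≤ 1/2) :
    dist (a : UnitAddCircle) (b : UnitAddCircle) = |a - b| := by
  rw [dist_eq_norm, ← AddCircle.coe_sub, norm_coe_of_le_half _ h]

/-- Points of a fiber of `Ed`. -/
lemma fiber_eq (d : ℕ) (hd : 0 < d) (t : ℝ) (w : UnitAddCircle) :
    Ed d w = (t : UnitAddCircle) ↔ ∃ j : ℕ, j < d ∧ w = (((t + j) / d : ℝ) : UnitAddCircle) := by
  constructor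
  · intro h
    induction w using QuotientAddGroup.induction_on with
    | H s =>
      rw [ed_coe, coe_eq_coe] at h
      obtain ⟨m, hm⟩ := h
      have hd0 : (0:ℤ) < (d:ℤ) := by exact_mod_cast hd
      obtain ⟨j, hj⟩ : ∃ j : ℕ, (j : ℤ) = m % d := ⟨(m % d).toNat,
        Int.toNat_of_nonneg (Int.emod_nonneg m hd0.ne')⟩
      have hjlt : (j:ℤ) < d := by rw [hj]; exact Int.emod_lt_of_pos m hd0
      set q : ℤ := m / d with hq
      have hdm := Int.mul_ediv_add_emod m (d:ℤ)
      have hdj : m = d * q + j := by rw [hj, hq]; linarith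
      refine ⟨j, by exact_mod_cast hjlt, ?_⟩
      rw [coe_eq_coe]
      refine ⟨q, ?_⟩
      have hd' : (d : ℝ) ≠ 0 := by positivity
      have hmr : (m:ℝ) = d * q + j := by exact_mod_cast hdj
      field_simp
      nlinarith [hm, hmr]
  · rintro ⟨j, hj, rfl⟩
    rw [ed_coe, coe_eq_coe]
    have hd' : (d : ℝ) ≠ 0 := by positivity
    refine ⟨(j:ℤ), ?_⟩
    push_cast
    field_simp
    ring

lemma fiber_finite (d : ℕ) (hd : 0 < d) (z : UnitAddCircle) :
    {w : UnitAddCircle | Ed d w = z}.Finite := by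
  induction z using QuotientAddGroup.induction_on with
  | H t =>
    have : {w : UnitAddCircle | Ed d w = (t : UnitAddCircle)} ⊆
        (fun j : ℕ => (((t + j) / d : ℝ) : UnitAddCircle)) '' (Iio d) := by
      intro w hw
      rw [mem_setOf_eq, fiber_eq d hd] at hw
      obtain ⟨j, hj, rfl⟩ := hw
      exact ⟨j, hj, rfl⟩
    exact Finite.subset ((finite_Iio d).image _) this

lemma norm_lower (d : ℕ) (hd : 0 < d) {u : UnitAddCircle} (h0 : Ed d u = 0)
    (hne : u ≠ 0) : (1:ℝ)/d ≤ ‖u‖ := by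
  induction u using QuotientAddGroup.induction_on with
  | H s =>
    rw [ed_coe] at h0
    have h0' : ((d * s : ℝ) : UnitAddCircle) = ((0:ℝ) : UnitAddCircle) := by
      simpa using h0
    obtain ⟨m, hm⟩ := (coe_eq_coe _ _).1 h0'
    have hm' : (d:ℝ) * s = m := by linarith
    rw [UnitAddCircle.norm_eq]
    set r := round s with hr
    have hd' : (d : ℝ) ≠ 0 := by positivity
    have hint : s - r = ((m - d*r : ℤ) : ℝ)/d := by
      push_cast
      field_simp
      linarith
    have hne' : (m - d*r : ℤ) ≠ 0 := by
      intro h0''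
      apply hne
      have hsr : s - (r:ℝ) = 0 := by
        rw [hint, h0'']; simp
      have : s = (r:ℝ) := by linarith
      rw [this, coe_int_zero]
    have h1 : (1:ℝ) ≤ |((m - d*r : ℤ) : ℝ)| := by
      have : 1 ≤ |(m - d*r : ℤ)| := Int.one_le_abs hne'
      calc (1:ℝ) = ((1:ℤ):ℝ) := by norm_num
      _ ≤ ((|(m - d*r : ℤ)| : ℤ) : ℝ) := by exact_mod_cast this
      _ = |((m - d*r : ℤ) : ℝ)| := by push_cast; ring
    rw [hint, abs_div, abs_of_pos (by positivity : (0:ℝ) < (d:ℝ))]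
    gcongr
    
lemma fiber_dist (d : ℕ) (hd : 0 < d) {z w w' : UnitAddCircle}
    (hw : Ed d w = z) (hw' : Ed d w' = z) (hne : w ≠ w') : (1:ℝ)/d ≤ dist w w' := by
  have h0 : Ed d (w - w') = 0 := by
    show d • (w - w') = 0
    rw [smul_sub]
    show Ed d w - Ed d w' = 0
    rw [hw, hw', sub_self]
  have := norm_lower d hd h0 (sub_ne_zero.2 hne)
  rwa [dist_eq_norm]

end S6

namespace S6

lemma closure_range_eq (d : ℕ) (η : UnitAddCircle → UnitAddCircle)
    (hsel : ∀ x, Ed d (η x) = x) {z w : UnitAddCircle} (hc : ContinuousAt η z)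
    (hw : w ∈ closure (Set.range η)) (hEw : Ed d w = z) : w = η z := by
  obtain ⟨x, hx, hlim⟩ := mem_closure_iff_seq_limit.1 hw
  choose t ht using hx
  have h2 : ∀ n, Ed d (x n) = t n := fun n => by rw [← ht n, hsel]
  have h1 : Filter.Tendsto (fun n => Ed d (x n)) Filter.atTop (nhds (Ed d w)) :=
    ((continuous_Ed d).continuousAt.tendsto).comp hlim
  rw [hEw] at h1
  simp only [h2] at h1
  have h3 : Filter.Tendsto (fun n => η (t n)) Filter.atTop (nhds (η z)) :=
    hc.tendsto.comp h1
  simp only [ht] at h3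
  exact tendsto_nhds_unique hlim h3

lemma forward (d : ℕ) (K : Set UnitAddCircle) (hinv : Ed d '' K = K)
    (η : UnitAddCircle → UnitAddCircle) (hη : IsPreimageSelector d η)
    (hcl : K ⊆ closure (Set.range η)) :
    ∀ x ∈ critVals d K, IsRegularCrit d K x := by
  obtain ⟨hsel, hfin⟩ := hη
  set D := {x | ¬ ContinuousAt η x} with hD
  have key : ∀ z ∈ K, z ∉ D → {w | Ed d w = z} ∩ K = {η z} := by
    intro z hzK hzD
    have hc : ContinuousAt η z := not_not.1 hzD
    have hηzK : η z ∈ K := by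
      obtain ⟨w, hwK, hEw⟩ : ∃ w ∈ K, Ed d w = z := by
        rw [← hinv] at hzK
        obtain ⟨w, hw, he⟩ := hzK
        exact ⟨w, hw, he⟩
      have := closure_range_eq d η hsel hc (hcl hwK) hEw
      rwa [← this]
    apply Set.eq_singleton_iff_unique_mem.2
    refine ⟨⟨hsel z, hηzK⟩, ?_⟩
    rintro w ⟨hEw, hwK⟩
    exact closure_range_eq d η hsel hc (hcl hwK) hEw
  intro x hx
  refine ⟨hx, ?_⟩
  obtain ⟨ε1, hε1, hball⟩ : ∃ ε1 > 0, Metric.ball x ε1 ⊆ (D \ {x})ᶜ := by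
    have hop : IsOpen (D \ {x})ᶜ := ((hfin.subset diff_subset).isClosed).isOpen_compl
    have hxmem : x ∈ (D \ {x})ᶜ := fun h => h.2 rfl
    exact Metric.isOpen_iff.1 hop x hxmem
  set ε : ℝ := min ε1 (1/4) with hε
  have hεpos : 0 < ε := lt_min hε1 (by norm_num)
  have hεhalf : ε < 1/2 := lt_of_le_of_lt (min_le_right _ _) (by norm_num)
  have notD : ∀ t : ℝ, t ≠ 0 → |t| < ε → x + (t : UnitAddCircle) ∉ D := by
    intro t ht0 htε hmem
    have habs : |t| ≤ 1/2 := le_of_lt (lt_of_lt_of_le htε (le_trans (min_le_right _ _) (by norm_num)))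
    have hdist : dist (x + (t : UnitAddCircle)) x = |t| := by
      rw [dist_eq_norm]
      have : x + (t : UnitAddCircle) - x = (t : UnitAddCircle) := by abel
      rw [this, norm_coe_of_le_half t habs]
    have hne : x + (t : UnitAddCircle) ≠ x := by
      intro h
      have : dist (x + (t : UnitAddCircle)) x = 0 := by rw [h, dist_self]
      rw [hdist] at this
      exact ht0 (abs_eq_zero.1 this)
    have : x + (t : UnitAddCircle) ∈ Metric.ball x ε1 := by
      rw [Metric.mem_ball, hdist]
      exact lt_of_lt_of_le htε (min_le_left _ _)
    exact (hball this) ⟨hmem, hne⟩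
  have notD' : ∀ z ∈ sideArc x (Set.Ioo (-ε) 0) ∪ sideArc x (Set.Ioo 0 ε), z ∉ D := by
    rintro z (⟨t, ht, rfl⟩ | ⟨t, ht, rfl⟩)
    · exact notD t (ne_of_lt ht.2) (by rw [abs_of_neg ht.2]; linarith [ht.1])
    · exact notD t (ne_of_gt ht.1) (by rw [abs_of_pos ht.1]; exact ht.2)
  refine ⟨ε, hεpos, hεhalf, η, η, ?_, ?_, ?_, ?_⟩
  · intro z hz
    exact (not_not.1 (notD' z (Or.inl hz))).continuousWithinAt
  · intro z hz
    exact (not_not.1 (notD' z (Or.inr hz))).continuousWithinAt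
  · intro z hz
    exact ⟨hsel z, fun hzK => key z hzK (notD' z (Or.inl hz))⟩
  · intro z hz
    exact ⟨hsel z, fun hzK => key z hzK (notD' z (Or.inr hz))⟩

end S6

namespace S6

lemma ed_sub (d : ℕ) (a b : UnitAddCircle) : Ed d (a - b) = Ed d a - Ed d b :=
  smul_sub d a b

/-- Decompose a nearby point into a side arc element. -/
lemma near_mem_sideArc {x z' : UnitAddCircle} {ε : ℝ} (hε : ε ≤ 1/2)
    (hne : z' ≠ x) (hdist : dist z' x < ε) :
    z' ∈ sideArc x (Set.Ioo (-ε) 0) ∪ sideArc x (Set.Ioo 0 ε) := by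
  set u := z' - x with hu
  obtain ⟨t, ht⟩ : ∃ t : Set.Ioc (-(1/2):ℝ) (-(1/2)+1), (AddCircle.equivIoc 1 (-(1/2)) u) = t :=
    ⟨_, rfl⟩
  have hut : u = ((t : ℝ) : UnitAddCircle) := by
    have := (AddCircle.equivIoc 1 (-(1/2))).symm_apply_apply u
    rw [ht] at this
    exact this.symm
  have htmem : (t:ℝ) ∈ Set.Ioc (-(1/2):ℝ) (1/2) := by
    have := t.2
    norm_num at this ⊢
    exact this
  have habs : |(t:ℝ)| ≤ 1/2 := abs_le.2 ⟨le_of_lt htmem.1, htmem.2⟩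
  have hnorm : ‖u‖ = |(t:ℝ)| := by rw [hut, norm_coe_of_le_half _ habs]
  have hdist' : dist z' x = ‖u‖ := by rw [dist_eq_norm, hu]
  have htlt : |(t:ℝ)| < ε := by rw [← hnorm, ← hdist']; exact hdist
  have htne : (t:ℝ) ≠ 0 := by
    intro h0
    apply hne
    have : u = 0 := by rw [hut, h0]; norm_num
    rw [hu] at this
    rw [sub_eq_zero] at this
    exact this
  have hz' : z' = x + ((t:ℝ) : UnitAddCircle) := by
    rw [← hut, hu]; abel
  rcases lt_or_gt_of_ne htne with hneg | hpos
  · left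
    exact ⟨t, ⟨by rw [abs_of_neg hneg] at htlt; linarith, hneg⟩, hz'.symm⟩
  · right
    exact ⟨t, ⟨hpos, by rwa [abs_of_pos hpos] at htlt⟩, hz'.symm⟩

/-- Two preimages in `K` of a non-critical value agree. -/
lemma uniqK {d : ℕ} {K : Set UnitAddCircle} {z a b : UnitAddCircle}
    (hz : z ∈ K) (hznc : z ∉ critVals d K) (ha : a ∈ K) (hb : b ∈ K)
    (hea : Ed d a = z) (heb : Ed d b = z) : a = b := by
  by_contra hne
  exact hznc ⟨hz, a, ha, b, hb, hne, hea, heb⟩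

/-- Near a regular critical value, points of `K` other than it are non-critical, with
`K`-preimage given by the singleton condition. -/
lemma no_crit_near {d : ℕ} {K : Set UnitAddCircle} {x : UnitAddCircle}
    (hx : IsRegularCrit d K x) :
    ∃ ε : ℝ, 0 < ε ∧ ε < 1/2 ∧
      ∀ z ∈ K, z ≠ x → dist z x < ε → ∃ v, {w : UnitAddCircle | Ed d w = z} ∩ K = {v} := by
  obtain ⟨-, ε, hε, hεh, ηm, ηp, -, -, hm, hp⟩ := hx
  refine ⟨ε, hε, hεh, fun z hzK hzne hzd => ?_⟩
  rcases near_mem_sideArc (le_of_lt hεh) hzne hzd with h | h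
  · exact ⟨ηm z, ((hm z h).2 hzK)⟩
  · exact ⟨ηp z, ((hp z h).2 hzK)⟩

lemma not_crit_of_singleton {d : ℕ} {K : Set UnitAddCircle} {z v : UnitAddCircle}
    (h : {w : UnitAddCircle | Ed d w = z} ∩ K = {v}) : z ∉ critVals d K := by
  rintro ⟨hz, y, hy, y', hy', hne, hey, hey'⟩
  have h1 : y ∈ ({v} : Set UnitAddCircle) := h ▸ ⟨hey, hy⟩
  have h2 : y' ∈ ({v} : Set UnitAddCircle) := h ▸ ⟨hey', hy'⟩
  exact hne (h1.trans h2.symm)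

/-- Periodic preimages of a common point coincide. -/
lemma periodic_preimage_unique {d : ℕ} {z w1 w2 : UnitAddCircle}
    (h1 : Ed d w1 = z) (h2 : Ed d w2 = z)
    (hp1 : ∃ p, 0 < p ∧ (Ed d)^[p] w1 = w1) (hp2 : ∃ q, 0 < q ∧ (Ed d)^[q] w2 = w2) :
    w1 = w2 := by
  obtain ⟨p, hp, hw1⟩ := hp1
  obtain ⟨q, hq, hw2⟩ := hp2
  have key : ∀ w r, 0 < r → (Ed d)^[r] w = w → Ed d w = z →
      (Ed d)^[r] z = z ∧ w = (Ed d)^[r-1] z := by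
    intro w r hr hwr hwz
    have hiter : (Ed d)^[r] z = z := by
      calc (Ed d)^[r] z = (Ed d)^[r] (Ed d w) := by rw [hwz]
      _ = Ed d ((Ed d)^[r] w) := Function.Commute.iterate_self (Ed d) r w
      _ = Ed d w := by rw [hwr]
      _ = z := hwz
    constructor
    · exact hiter
    · have : (Ed d)^[r-1] z = (Ed d)^[r-1] (Ed d w) := by rw [hwz]
      rw [this, ← Function.iterate_succ_apply, Nat.succ_eq_add_one, Nat.sub_add_cancel hr, hwr]
  obtain ⟨hz1, he1⟩ := key w1 p hp hw1 h1
  obtain ⟨hz2, he2⟩ := key w2 q hq hw2 h2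
  wlog hpq : p ≤ q generalizing p q w1 w2
  · exact (this h2 h1 q hq hw2 p hp hw1 hz2 he2 hz1 he1 (le_of_not_ge hpq)).symm
  have hzqp : (Ed d)^[q-p] z = z := by
    have : (Ed d)^[q-p] ((Ed d)^[p] z) = (Ed d)^[q] z := by
      rw [← Function.iterate_add_apply]
      congr 1
      omega
    rw [hz1] at this
    rw [this, hz2]
  have : (Ed d)^[q-1] z = (Ed d)^[p-1] z := by
    have h3 : (Ed d)^[p-1] ((Ed d)^[q-p] z) = (Ed d)^[q-1] z := by
      rw [← Function.iterate_add_apply]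
      congr 1
      omega
    rw [hzqp] at h3
    exact h3.symm
  rw [he1, he2, this]

end S6

namespace S6

open Classical in
/-- The preferred `K`-preimage: periodic if possible. -/
noncomputable def wKf (d : ℕ) (K : Set UnitAddCircle) (z : UnitAddCircle) : UnitAddCircle :=
  if h : ∃ w, w ∈ K ∧ Ed d w = z ∧ ∃ n, 0 < n ∧ (Ed d)^[n] w = w then h.choose
  else if h2 : ∃ w, w ∈ K ∧ Ed d w = z then h2.choose
  else 0

lemma wKf_mem {d : ℕ} {K : Set UnitAddCircle} {z : UnitAddCircle}
    (h : ∃ w, w ∈ K ∧ Ed d w = z) : wKf d K z ∈ K ∧ Ed d (wKf d K z) = z := by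
  rw [wKf]
  by_cases h1 : ∃ w, w ∈ K ∧ Ed d w = z ∧ ∃ n, 0 < n ∧ (Ed d)^[n] w = w
  · rw [dif_pos h1]
    exact ⟨h1.choose_spec.1, h1.choose_spec.2.1⟩
  · rw [dif_neg h1, dif_pos h]
    exact ⟨h.choose_spec.1, h.choose_spec.2⟩

lemma wKf_uniq {d : ℕ} {K : Set UnitAddCircle} {z w : UnitAddCircle}
    (hz : z ∈ K) (hznc : z ∉ critVals d K) (hw : w ∈ K) (hew : Ed d w = z) :
    wKf d K z = w := by
  have h := wKf_mem (K := K) ⟨w, hw, hew⟩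
  exact uniqK hz hznc h.1 hw h.2 hew

lemma wKf_per {d : ℕ} {K : Set UnitAddCircle} {z w : UnitAddCircle}
    (hw : w ∈ K) (hew : Ed d w = z) (hper : ∃ n, 0 < n ∧ (Ed d)^[n] w = w) :
    wKf d K z = w := by
  have hex : ∃ w', w' ∈ K ∧ Ed d w' = z ∧ ∃ n, 0 < n ∧ (Ed d)^[n] w' = w' :=
    ⟨w, hw, hew, hper⟩
  rw [wKf, dif_pos hex]
  exact periodic_preimage_unique hex.choose_spec.2.1 hew hex.choose_spec.2.2 hper

lemma iter_mem {d : ℕ} {K : Set UnitAddCircle} (hfwd : ∀ z ∈ K, Ed d z ∈ K) :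
    ∀ n, ∀ z ∈ K, (Ed d)^[n] z ∈ K := by
  intro n
  induction n with
  | zero => exact fun z hz => hz
  | succ n ih =>
    intro z hz
    rw [Function.iterate_succ_apply]
    exact ih _ (hfwd z hz)

/-- Convergence of unique preimages at non-critical points. -/
lemma preimage_tendsto (d : ℕ) (hd : 0 < d) (K : Set UnitAddCircle) (hKc : IsCompact K)
    {z w : UnitAddCircle} (hz : z ∈ K) (hznc : z ∉ critVals d K) (hw : w ∈ K)
    (hew : Ed d w = z) (zs ws : ℕ → UnitAddCircle) (hzs : ∀ n, zs n ∈ K)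
    (hws : ∀ n, ws n ∈ K ∧ Ed d (ws n) = zs n)
    (hlim : Filter.Tendsto zs Filter.atTop (nhds z)) :
    Filter.Tendsto ws Filter.atTop (nhds w) := by
  by_contra hnot
  rw [Metric.tendsto_atTop] at hnot
  push_neg at hnot
  obtain ⟨ε, hε, hfreq⟩ := hnot
  obtain ⟨φ, hφ, hφd⟩ := Filter.extraction_of_frequently_atTop
    (Filter.frequently_atTop.2 fun N => by
      obtain ⟨n, hn, hd'⟩ := hfreq N
      exact ⟨n, hn, hd'⟩)
  obtain ⟨v, hvK, φ2, hφ2, hvlim⟩ := hKc.tendsto_subseq (fun n => (hws (φ n)).1)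
  have hzsub : Filter.Tendsto (fun n => zs (φ (φ2 n))) Filter.atTop (nhds z) :=
    hlim.comp ((hφ.comp hφ2).tendsto_atTop)
  have hEv : Ed d v = z := by
    have h1 : Filter.Tendsto (fun n => Ed d (ws (φ (φ2 n)))) Filter.atTop (nhds (Ed d v)) :=
      (continuous_Ed d).continuousAt.tendsto.comp hvlim
    have h2 : (fun n => Ed d (ws (φ (φ2 n)))) = fun n => zs (φ (φ2 n)) := by
      funext n
      exact (hws (φ (φ2 n))).2
    rw [h2] at h1
    exact tendsto_nhds_unique h1 hzsub
  have hvw : v = w := uniqK hz hznc hvK hw hEv hew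
  have hdist : Filter.Tendsto (fun n => dist (ws (φ (φ2 n))) w) Filter.atTop
      (nhds (dist v w)) := hvlim.dist tendsto_const_nhds
  have : ε ≤ dist v w := ge_of_tendsto' hdist (fun n => hφd (φ2 n))
  rw [hvw, dist_self] at this
  linarith

end S6

namespace S6

lemma crit_finite (d : ℕ) (hd : 0 < d) (K : Set UnitAddCircle) (hKc : IsCompact K)
    (hreg : ∀ x ∈ critVals d K, IsRegularCrit d K x) : (critVals d K).Finite := by
  by_contra hinf
  have hinf' : (critVals d K).Infinite := hinf
  set C := critVals d K with hC
  have hCK : C ⊆ K := fun x hx => hx.1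
  obtain ⟨f⟩ : Nonempty (ℕ ↪ ↥C) := ⟨hinf'.natEmbedding⟩
  set x : ℕ → UnitAddCircle := fun n => (f n : UnitAddCircle) with hxdef
  have hxinj : Function.Injective x := Subtype.val_injective.comp f.injective
  have hxC : ∀ n, x n ∈ C := fun n => (f n).2
  obtain ⟨p, hpK, φ, hφ, hplim⟩ := hKc.tendsto_subseq (fun n => hCK (hxC n))
  have hY : ∀ n, ∃ y ∈ K, ∃ z ∈ K, y ≠ z ∧ Ed d y = x n ∧ Ed d z = x n :=
    fun n => (hxC n).2
  choose Y hYK Z hZK hYZ hEY hEZ using hY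
  obtain ⟨Ya, hYaK, φ2, hφ2, hYlim⟩ := hKc.tendsto_subseq (fun n => hYK (φ n))
  obtain ⟨Za, hZaK, φ3, hφ3, hZlim⟩ := hKc.tendsto_subseq
    (fun n => hZK (φ (φ2 n)))
  set ψ : ℕ → ℕ := fun n => φ (φ2 (φ3 n)) with hψ
  have hψmono : StrictMono ψ := hφ.comp (hφ2.comp hφ3)
  have hxlim : Filter.Tendsto (fun n => x (ψ n)) Filter.atTop (nhds p) :=
    hplim.comp ((hφ2.comp hφ3).tendsto_atTop)
  have hYlim' : Filter.Tendsto (fun n => Y (ψ n)) Filter.atTop (nhds Ya) :=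
    hYlim.comp (hφ3.tendsto_atTop)
  have hZlim' : Filter.Tendsto (fun n => Z (ψ n)) Filter.atTop (nhds Za) := hZlim
  have hEYa : Ed d Ya = p := by
    have h1 : Filter.Tendsto (fun n => Ed d (Y (ψ n))) Filter.atTop (nhds (Ed d Ya)) :=
      (continuous_Ed d).continuousAt.tendsto.comp hYlim'
    have h2 : (fun n => Ed d (Y (ψ n))) = fun n => x (ψ n) := funext fun n => hEY (ψ n)
    rw [h2] at h1
    exact tendsto_nhds_unique h1 hxlim
  have hEZa : Ed d Za = p := by
    have h1 : Filter.Tendsto (fun n => Ed d (Z (ψ n))) Filter.atTop (nhds (Ed d Za)) :=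
      (continuous_Ed d).continuousAt.tendsto.comp hZlim'
    have h2 : (fun n => Ed d (Z (ψ n))) = fun n => x (ψ n) := funext fun n => hEZ (ψ n)
    rw [h2] at h1
    exact tendsto_nhds_unique h1 hxlim
  have hYZa : Ya ≠ Za := by
    intro he
    have hdist : Filter.Tendsto (fun n => dist (Y (ψ n)) (Z (ψ n))) Filter.atTop
        (nhds (dist Ya Za)) := hYlim'.dist hZlim'
    have hge : (1:ℝ)/d ≤ dist Ya Za :=
      ge_of_tendsto' hdist fun n => fiber_dist d hd (hEY (ψ n)) (hEZ (ψ n)) (hYZ (ψ n))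
    rw [he, dist_self] at hge
    have : (0:ℝ) < 1/d := by positivity
    linarith
  have hpC : p ∈ C := ⟨hpK, Ya, hYaK, Za, hZaK, hYZa, hEYa, hEZa⟩
  obtain ⟨ε, hε, hεh, hsing⟩ := no_crit_near (hreg p hpC)
  have hev : ∀ᶠ n in Filter.atTop, dist (x (ψ n)) p < ε := by
    have := (Metric.tendsto_atTop.1 hxlim) ε hε
    obtain ⟨N, hN⟩ := this
    exact Filter.eventually_atTop.2 ⟨N, hN⟩
  have heq : ∀ᶠ n in Filter.atTop, x (ψ n) = p := by
    filter_upwards [hev] with n hn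
    by_contra hne
    obtain ⟨v, hv⟩ := hsing _ (hCK (hxC (ψ n))) hne hn
    exact (not_crit_of_singleton hv) (hxC (ψ n))
  obtain ⟨n1, hn1⟩ := (Filter.eventually_atTop.1 heq)
  have h1 : x (ψ n1) = p := hn1 n1 le_rfl
  have h2 : x (ψ (n1+1)) = p := hn1 (n1+1) (by omega)
  have : ψ n1 = ψ (n1+1) := hxinj (h1.trans h2.symm)
  exact absurd this (ne_of_lt (hψmono (by omega)))

end S6

namespace S6

lemma approx_mem_closure (d : ℕ) (K : Set UnitAddCircle)
    (hfwd : ∀ z ∈ K, Ed d z ∈ K)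
    (hreg : ∀ x ∈ critVals d K, IsRegularCrit d K x)
    {z w : UnitAddCircle} (hzC : z ∈ critVals d K) (hwz : Ed d w = z)
    (v : ℕ → UnitAddCircle) (hv : ∀ n, v n ∈ K)
    (hlim : Filter.Tendsto v Filter.atTop (nhds w))
    (hvne : ∀ n, Ed d (v n) ≠ z) :
    w ∈ closure (wKf d K '' (K \ critVals d K)) := by
  obtain ⟨ε, hε, hεh, hsing⟩ := no_crit_near (hreg z hzC)
  have hEdlim : Filter.Tendsto (fun n => Ed d (v n)) Filter.atTop (nhds z) := by
    have := (continuous_Ed d).continuousAt.tendsto.comp hlim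
    rwa [hwz] at this
  have hev : ∀ᶠ n in Filter.atTop, dist (Ed d (v n)) z < ε := by
    obtain ⟨N, hN⟩ := (Metric.tendsto_atTop.1 hEdlim) ε hε
    exact Filter.eventually_atTop.2 ⟨N, hN⟩
  have hmem : ∀ᶠ n in Filter.atTop, v n ∈ wKf d K '' (K \ critVals d K) := by
    filter_upwards [hev] with n hn
    obtain ⟨u, hu⟩ := hsing (Ed d (v n)) (hfwd _ (hv n)) (hvne n) hn
    have hvn : v n ∈ {w : UnitAddCircle | Ed d w = Ed d (v n)} ∩ K := ⟨rfl, hv n⟩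
    rw [hu] at hvn
    have hnc := not_crit_of_singleton hu
    have hwKmem := wKf_mem (K := K) (z := Ed d (v n)) ⟨v n, hv n, rfl⟩
    have hwKu : wKf d K (Ed d (v n)) ∈ {w : UnitAddCircle | Ed d w = Ed d (v n)} ∩ K :=
      ⟨hwKmem.2, hwKmem.1⟩
    rw [hu] at hwKu
    refine ⟨Ed d (v n), ⟨hfwd _ (hv n), hnc⟩, ?_⟩
    rw [hwKu, ← hvn]
  exact mem_closure_of_tendsto hlim hmem

lemma nonwandering_cover (d : ℕ) (hd : 0 < d) (K : Set UnitAddCircle)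
    (hfwd : ∀ z ∈ K, Ed d z ∈ K) (hnw : NonWanderingOn d K)
    (hreg : ∀ x ∈ critVals d K, IsRegularCrit d K x)
    {z w : UnitAddCircle} (hzC : z ∈ critVals d K) (hw : w ∈ K) (hew : Ed d w = z) :
    w ∈ closure (wKf d K '' (K \ critVals d K)) ∨ ∃ n, 0 < n ∧ (Ed d)^[n] w = w := by
  have hpos : ∀ m : ℕ, (0:ℝ) < 1/(m+1) := fun m => by positivity
  choose y hyK nn hnn hd1 hd2 using fun m : ℕ => hnw w hw (1/(m+1)) (hpos m)
  have hrecip : ∀ {N m : ℕ}, N ≤ m → (1:ℝ)/(m+1) ≤ 1/(N+1) := by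
    intro N m h
    apply div_le_div_of_nonneg_left (by norm_num) (by positivity)
    exact_mod_cast by omega
  have htendsto_aux : ∀ (u : ℕ → UnitAddCircle), (∀ m, dist w (u m) < 1/(m+1)) →
      Filter.Tendsto u Filter.atTop (nhds w) := by
    intro u hu
    rw [Metric.tendsto_atTop]
    intro ε hε
    obtain ⟨N, hN⟩ := exists_nat_one_div_lt hε
    refine ⟨N, fun m hm => ?_⟩
    rw [dist_comm]
    calc dist w (u m) < 1/(m+1) := hu m
    _ ≤ 1/(N+1) := hrecip hm
    _ < ε := hN
  by_cases hA : ∀ M : ℕ, ∃ m ≥ M, Ed d (y m) ≠ z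
  · left
    obtain ⟨φ, hφ, hφp⟩ := Filter.extraction_of_frequently_atTop
      (Filter.frequently_atTop.2 hA)
    apply approx_mem_closure d K hfwd hreg hzC hew (fun k => y (φ k))
      (fun k => hyK (φ k)) ?_ hφp
    rw [Metric.tendsto_atTop]
    intro ε hε
    obtain ⟨N, hN⟩ := exists_nat_one_div_lt hε
    refine ⟨N, fun m hm => ?_⟩
    rw [dist_comm]
    calc dist w (y (φ m)) < 1/(φ m + 1) := hd1 (φ m)
    _ ≤ 1/(N+1) := hrecip (le_trans hm (hφ.le_apply))
    _ < ε := hN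
  · push_neg at hA
    obtain ⟨M, hM⟩ := hA
    have hyw : ∀ m, M ≤ m → d ≤ m → y m = w := by
      intro m hMm hdm
      by_contra hne
      have h1 : (1:ℝ)/d ≤ dist w (y m) :=
        fiber_dist d hd hew (hM m hMm) (Ne.symm hne)
      have h2 : dist w (y m) < 1/(m+1) := hd1 m
      have h3 : (1:ℝ)/(m+1) ≤ 1/(d+1) := hrecip hdm
      have h4 : (1:ℝ)/(d+1) < 1/d := by
        apply div_lt_div_of_pos_left (by norm_num) (by positivity)
        norm_num
      linarith
    by_cases hper : ∃ n, 0 < n ∧ (Ed d)^[n] w = w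
    · right; exact hper
    · left
      push_neg at hper
      set M' := max M d with hM'
      have hitw : ∀ m, M' ≤ m → dist w ((Ed d)^[nn m] w) < 1/(m+1) := by
        intro m hm
        have := hd2 m
        rwa [hyw m (le_trans (le_max_left _ _) hm) (le_trans (le_max_right _ _) hm)] at this
      -- the sequence of iterates tends to w and eventually avoids the fiber
      have hitne : ∀ m, M' ≤ m → d ≤ m → Ed d ((Ed d)^[nn m] w) ≠ z := by
        intro m hm hdm heq
        have hfib : (Ed d)^[nn m] w = w := by
          by_contra hne
          have h1 : (1:ℝ)/d ≤ dist w ((Ed d)^[nn m] w) :=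
            fiber_dist d hd hew heq (Ne.symm hne)
          have h2 := hitw m hm
          have h3 : (1:ℝ)/(m+1) ≤ 1/(d+1) := hrecip hdm
          have h4 : (1:ℝ)/(d+1) < 1/d := by
            apply div_lt_div_of_pos_left (by norm_num) (by positivity)
            norm_num
          linarith
        exact hper (nn m) (hnn m) hfib
      set M'' := max M' d with hM''
      apply approx_mem_closure d K hfwd hreg hzC hew
        (fun k => (Ed d)^[nn (k + M'')] w) (fun k => iter_mem hfwd _ _ hw) ?_ ?_
      · rw [Metric.tendsto_atTop]
        intro ε hε
        obtain ⟨N, hN⟩ := exists_nat_one_div_lt hε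
        refine ⟨N, fun m hm => ?_⟩
        rw [dist_comm]
        have h1 : dist w ((Ed d)^[nn (m + M'')] w) < 1/((m + M'' : ℕ) + 1) :=
          hitw (m + M'') (by omega)
        have h2 : (1:ℝ)/((m + M'' : ℕ) + 1) ≤ 1/((N:ℝ)+1) := hrecip (by omega)
        linarith
      · intro k
        exact hitne (k + M'') (by omega) (by omega)

end S6

namespace S6

lemma continuous_coe : Continuous (fun t : ℝ => (t : UnitAddCircle)) :=
  AddCircle.continuous_mk' 1

/-- `Ed` applied to a branch value. -/
lemma ed_branch (d : ℕ) (hd : 0 < d) (u : ℝ) (k : ℤ) :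
    Ed d ((((u + k) / d : ℝ)) : UnitAddCircle) = (u : UnitAddCircle) := by
  have hd' : (d:ℝ) ≠ 0 := by positivity
  rw [ed_coe d ((u + k)/d)]
  rw [mul_div_cancel₀ _ hd']
  rw [AddCircle.coe_add, coe_int_zero, add_zero]

/-- A continuous section over a one-sided arc is a single affine branch. -/
lemma sect_const (d : ℕ) (hd : 0 < d) {a b : ℝ} (hab : a < b) (s : ℝ)
    (η' : UnitAddCircle → UnitAddCircle)
    (hsec : ∀ t ∈ Set.Ioo a b, Ed d (η' (((s + t : ℝ)) : UnitAddCircle)) = ((s + t : ℝ) : UnitAddCircle))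
    (hcont : ContinuousOn η' (sideArc ((s : ℝ) : UnitAddCircle) (Set.Ioo a b))) :
    ∃ k : ℤ, ∀ t ∈ Set.Ioo a b, η' (((s + t : ℝ)) : UnitAddCircle)
      = (((s + t + k) / d : ℝ) : UnitAddCircle) := by
  classical
  set F : ℝ → UnitAddCircle :=
    fun t => η' (((s + t : ℝ)) : UnitAddCircle) - (((s + t) / d : ℝ) : UnitAddCircle) with hF
  set T : Set UnitAddCircle := {u | Ed d u = 0} with hT
  have hTfin : T.Finite := fiber_finite d hd 0
  have hmaps : Set.MapsTo F (Set.Ioo a b) T := by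
    intro t ht
    show Ed d (F t) = 0
    rw [hF]
    simp only
    rw [ed_sub, hsec t ht]
    rw [show Ed d ((((s + t) / d : ℝ)) : UnitAddCircle) = ((s + t : ℝ) : UnitAddCircle) from ?_]
    · abel
    · have := ed_branch d hd (s + t) 0
      simpa using this
  have hcc : Continuous (fun t : ℝ => ((s + t : ℝ) : UnitAddCircle)) :=
    continuous_coe.comp (continuous_const.add continuous_id)
  have hFcont : ContinuousOn F (Set.Ioo a b) := by
    apply ContinuousOn.sub
    · apply ContinuousOn.comp hcont hcc.continuousOn
      intro t ht
      exact ⟨t, ht, by simp [AddCircle.coe_add]⟩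
    · exact (continuous_coe.comp ((continuous_const.add continuous_id).div_const _)).continuousOn
  haveI : Finite ↥T := hTfin.to_subtype
  haveI : DiscreteTopology ↥T := Finite.instDiscreteTopology
  set t₀ : ℝ := (a + b) / 2 with ht₀
  have ht₀m : t₀ ∈ Set.Ioo a b := ⟨by linarith, by linarith⟩
  have hconst : ∀ t ∈ Set.Ioo a b, F t = F t₀ := fun t ht =>
    (isPreconnected_Ioo (a := a) (b := b)).constant_of_mapsTo (isDiscrete_iff_discreteTopology.2 inferInstance) hFcont hmaps ht ht₀m
  have hFT : F t₀ ∈ T := hmaps ht₀m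
  rw [hT, Set.mem_setOf_eq] at hFT
  have h0 : Ed d (F t₀) = ((0 : ℝ) : UnitAddCircle) := by simpa using hFT
  rw [fiber_eq d hd] at h0
  obtain ⟨j, hj, hFj⟩ := h0
  refine ⟨(j : ℤ), fun t ht => ?_⟩
  have h1 : η' (((s + t : ℝ)) : UnitAddCircle)
      = (((s + t) / d : ℝ) : UnitAddCircle) + F t := by
    rw [hF]; simp only; abel
  rw [h1, hconst t ht, hFj]
  rw [← AddCircle.coe_add]
  congr 1
  push_cast
  ring

end S6

namespace S6

/-- Local single-branch matching at a non-critical point of `K`. -/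
lemma matchM1 (d : ℕ) (hd : 0 < d) (K : Set UnitAddCircle) (hKc : IsCompact K)
    (hpre : ∀ z ∈ K, ∃ w, w ∈ K ∧ Ed d w = z)
    {s : ℝ} (hs : ((s:ℝ) : UnitAddCircle) ∈ K) (hsnc : ((s:ℝ) : UnitAddCircle) ∉ critVals d K) :
    ∃ δ : ℝ, 0 < δ ∧ ∃ k : ℤ, ∀ t : ℝ, |t| < δ → (((s + t : ℝ)) : UnitAddCircle) ∈ K →
      wKf d K (((s + t : ℝ)) : UnitAddCircle) = (((s + t + k) / d : ℝ) : UnitAddCircle) := by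
  set z : UnitAddCircle := ((s:ℝ) : UnitAddCircle) with hz
  obtain ⟨hwm, hwe⟩ := wKf_mem (K := K) (hpre z hs)
  obtain ⟨j, hj, hwj⟩ := (fiber_eq d hd s (wKf d K z)).1 hwe
  by_contra hcon
  push_neg at hcon
  have hsel : ∀ n : ℕ, ∃ t : ℝ, |t| < 1/(n+1) ∧ (((s + t : ℝ)) : UnitAddCircle) ∈ K ∧
      wKf d K (((s + t : ℝ)) : UnitAddCircle) ≠ (((s + t + j) / d : ℝ) : UnitAddCircle) := by
    intro n
    obtain ⟨t, ht1, ht2, ht3⟩ := hcon (1/(n+1)) (by positivity) (j : ℤ)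
    exact ⟨t, ht1, ht2, ht3⟩
  choose tt htt1 htt2 htt3 using hsel
  have httlim : Filter.Tendsto tt Filter.atTop (nhds 0) := by
    rw [Metric.tendsto_atTop]
    intro ε hε
    obtain ⟨N, hN⟩ := exists_nat_one_div_lt hε
    refine ⟨N, fun n hn => ?_⟩
    rw [Real.dist_eq, sub_zero]
    calc |tt n| < 1/(n+1) := htt1 n
    _ ≤ 1/(N+1) := by
        apply div_le_div_of_nonneg_left (by norm_num) (by positivity)
        exact_mod_cast by omega
    _ < ε := hN
  set zs : ℕ → UnitAddCircle := fun n => (((s + tt n : ℝ)) : UnitAddCircle) with hzs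
  have hzslim : Filter.Tendsto zs Filter.atTop (nhds z) := by
    have h1 : Filter.Tendsto (fun n => s + tt n) Filter.atTop (nhds (s + 0)) :=
      tendsto_const_nhds.add httlim
    rw [add_zero] at h1
    exact (continuous_coe.continuousAt.tendsto).comp h1
  have hzsK : ∀ n, zs n ∈ K := htt2
  set ws : ℕ → UnitAddCircle := fun n => wKf d K (zs n) with hws
  have hwsp : ∀ n, ws n ∈ K ∧ Ed d (ws n) = zs n := fun n => wKf_mem (hpre _ (hzsK n))
  have hwslim : Filter.Tendsto ws Filter.atTop (nhds (wKf d K z)) :=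
    preimage_tendsto d hd K hKc hs hsnc hwm hwe zs ws hzsK hwsp hzslim
  set bs : ℕ → UnitAddCircle := fun n => (((s + tt n + j) / d : ℝ) : UnitAddCircle) with hbs
  have hbse : ∀ n, Ed d (bs n) = zs n := by
    intro n
    have h := ed_branch d hd (s + tt n) (j : ℤ)
    push_cast at h
    exact h
  have hbslim : Filter.Tendsto bs Filter.atTop (nhds (wKf d K z)) := by
    rw [hwj]
    have h1 : Filter.Tendsto (fun n => (s + tt n + j)/d) Filter.atTop (nhds ((s + 0 + j)/d)) :=
      ((tendsto_const_nhds.add httlim).add tendsto_const_nhds).div_const _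
    rw [add_zero] at h1
    exact (continuous_coe.continuousAt.tendsto).comp h1
  have hdlim : Filter.Tendsto (fun n => dist (ws n) (bs n)) Filter.atTop
      (nhds (dist (wKf d K z) (wKf d K z))) := hwslim.dist hbslim
  rw [dist_self] at hdlim
  have hge : (1:ℝ)/d ≤ 0 :=
    ge_of_tendsto' hdlim fun n =>
      fiber_dist d hd ((hwsp n).2) (hbse n) (fun he => htt3 n he)
  have : (0:ℝ) < 1/d := by positivity
  linarith

/-- Local one-sided branch matching at a critical point of `K`. -/
lemma matchM2 (d : ℕ) (hd : 0 < d) (K : Set UnitAddCircle)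
    (hpre : ∀ z ∈ K, ∃ w, w ∈ K ∧ Ed d w = z)
    {s : ℝ} (hsC : ((s:ℝ) : UnitAddCircle) ∈ critVals d K)
    (hreg : ∀ x ∈ critVals d K, IsRegularCrit d K x) :
    ∃ δ : ℝ, 0 < δ ∧ ∃ km kp : ℤ,
      (∀ t ∈ Set.Ioo (-δ) (0:ℝ), (((s + t : ℝ)) : UnitAddCircle) ∈ K →
        wKf d K (((s + t : ℝ)) : UnitAddCircle) = (((s + t + km) / d : ℝ) : UnitAddCircle)) ∧
      (∀ t ∈ Set.Ioo (0:ℝ) δ, (((s + t : ℝ)) : UnitAddCircle) ∈ K →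
        wKf d K (((s + t : ℝ)) : UnitAddCircle) = (((s + t + kp) / d : ℝ) : UnitAddCircle)) := by
  obtain ⟨-, ε, hε, hεh, ηm, ηp, hcm, hcp, hm, hp⟩ := hreg _ hsC
  have harc : ∀ t : ℝ, ((s : ℝ) : UnitAddCircle) + ((t:ℝ) : UnitAddCircle)
      = (((s + t : ℝ)) : UnitAddCircle) := fun t => by rw [AddCircle.coe_add]
  have hmem : ∀ {a b : ℝ}, ∀ t ∈ Set.Ioo a b, (((s + t : ℝ)) : UnitAddCircle)
      ∈ sideArc ((s:ℝ) : UnitAddCircle) (Set.Ioo a b) := by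
    intro a b t ht
    exact ⟨t, ht, harc t⟩
  obtain ⟨km, hkm⟩ := sect_const d hd (show -ε < (0:ℝ) by linarith) s ηm
    (fun t ht => (hm _ (hmem t ht)).1) hcm
  obtain ⟨kp, hkp⟩ := sect_const d hd (show (0:ℝ) < ε by linarith) s ηp
    (fun t ht => (hp _ (hmem t ht)).1) hcp
  refine ⟨ε, hε, km, kp, ?_, ?_⟩
  · intro t ht hK
    have hsing := (hm _ (hmem t ht)).2 hK
    have hw := wKf_mem (K := K) (hpre _ hK)
    have : wKf d K (((s + t : ℝ)) : UnitAddCircle) ∈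
        {w : UnitAddCircle | Ed d w = (((s + t : ℝ)) : UnitAddCircle)} ∩ K := ⟨hw.2, hw.1⟩
    rw [hsing] at this
    rw [this, hkm t ht]
  · intro t ht hK
    have hsing := (hp _ (hmem t ht)).2 hK
    have hw := wKf_mem (K := K) (hpre _ hK)
    have : wKf d K (((s + t : ℝ)) : UnitAddCircle) ∈
        {w : UnitAddCircle | Ed d w = (((s + t : ℝ)) : UnitAddCircle)} ∩ K := ⟨hw.2, hw.1⟩
    rw [hsing] at this
    rw [this, hkp t ht]

end S6

namespace S6

lemma dist_coe_le (a b : ℝ) : dist (a : UnitAddCircle) (b : UnitAddCircle) ≤ |a - b| := by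
  rw [dist_eq_norm, ← AddCircle.coe_sub]
  set t := a - b
  by_cases h : |t| ≤ 1/2
  · rw [norm_coe_of_le_half t h]
  · have h1 : ‖(t : UnitAddCircle)‖ ≤ 1/2 := by
      rw [UnitAddCircle.norm_eq]
      exact abs_sub_round t
    linarith [not_le.1 h]

lemma dist_coe' (a b : ℝ) (h : |a - b| ≤ 1/2) :
    dist (a : UnitAddCircle) (b : UnitAddCircle) = |a - b| := by
  rw [dist_eq_norm, ← AddCircle.coe_sub, norm_coe_of_le_half _ h]

lemma fiber_two (d : ℕ) (hd : 2 ≤ d) (z : UnitAddCircle) :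
    ∃ w w' : UnitAddCircle, Ed d w = z ∧ Ed d w' = z ∧ w ≠ w' := by
  have hd0 : 0 < d := by omega
  induction z using QuotientAddGroup.induction_on with
  | H t =>
    refine ⟨(((t + (0:ℕ)) / d : ℝ) : UnitAddCircle), (((t + (1:ℕ)) / d : ℝ) : UnitAddCircle),
      ?_, ?_, ?_⟩
    · exact (fiber_eq d hd0 t _).2 ⟨0, by omega, rfl⟩
    · exact (fiber_eq d hd0 t _).2 ⟨1, by omega, rfl⟩
    · intro h
      rw [coe_eq_coe] at h
      obtain ⟨m, hm⟩ := h
      have hd' : (d:ℝ) ≠ 0 := by positivity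
      have h1 : (t + (0:ℕ))/d - (t + (1:ℕ))/d = -(1/d) := by field_simp; push_cast; ring
      rw [h1] at hm
      have h2 : (0:ℝ) < 1/d := by positivity
      have h3 : (1:ℝ)/d ≤ 1/2 := by
        apply div_le_div_of_nonneg_left (by norm_num) (by norm_num)
        exact_mod_cast hd
      have h4 : (-1:ℝ) < m := by rw [← hm]; linarith
      have h5 : (m:ℝ) < 0 := by rw [← hm]; linarith
      have h6 : (-1:ℤ) < m := by exact_mod_cast h4
      have h7 : m < (0:ℤ) := by exact_mod_cast h5
      omega

lemma exists_notin_K (d : ℕ) (hd : 2 ≤ d) (K : Set UnitAddCircle)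
    (hreg : ∀ x ∈ critVals d K, IsRegularCrit d K x) : ∃ x₀, x₀ ∉ K := by
  by_contra h
  push_neg at h
  obtain ⟨w, w', hw, hw', hne⟩ := fiber_two d hd 0
  have h0C : (0 : UnitAddCircle) ∈ critVals d K := ⟨h 0, w, h w, w', h w', hne, hw, hw'⟩
  obtain ⟨ε, hε, hεh, hsing⟩ := no_crit_near (hreg 0 h0C)
  set z : UnitAddCircle := ((ε/2 : ℝ) : UnitAddCircle) with hzdef
  have hznorm : ‖z‖ = ε/2 := by
    rw [hzdef, norm_coe_of_le_half _ (by rw [abs_of_pos (by linarith)]; linarith)]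
    rw [abs_of_pos (by linarith)]
  have hzne : z ≠ 0 := by
    intro h0
    rw [h0, norm_zero] at hznorm
    linarith
  have hzd : dist z 0 < ε := by
    rw [dist_zero_right, hznorm]
    linarith
  obtain ⟨v, hv⟩ := hsing z (h z) hzne hzd
  obtain ⟨a, b, ha, hb, hab⟩ := fiber_two d hd z
  have h1 : a ∈ ({v} : Set UnitAddCircle) := hv ▸ ⟨ha, h a⟩
  have h2 : b ∈ ({v} : Set UnitAddCircle) := hv ▸ ⟨hb, h b⟩
  exact hab (h1.trans h2.symm)

noncomputable def Lf (θ : ℝ) (x : UnitAddCircle) : ℝ :=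
  ((AddCircle.equivIoc 1 θ x : Set.Ioc θ (θ+1)) : ℝ)

lemma Lf_mem (θ : ℝ) (x : UnitAddCircle) : Lf θ x ∈ Set.Ioc θ (θ+1) :=
  (AddCircle.equivIoc 1 θ x).2

lemma coe_Lf (θ : ℝ) (x : UnitAddCircle) : ((Lf θ x : ℝ) : UnitAddCircle) = x := by
  change ((AddCircle.equivIoc 1 θ).symm (AddCircle.equivIoc 1 θ x)) = x
  exact (AddCircle.equivIoc 1 θ).symm_apply_apply x

lemma coe_inj_Ioc {θ a b : ℝ} (ha : a ∈ Set.Ioc θ (θ+1)) (hb : b ∈ Set.Ioc θ (θ+1))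
    (h : (a : UnitAddCircle) = (b : UnitAddCircle)) : a = b := by
  obtain ⟨m, hm⟩ := (coe_eq_coe a b).1 h
  have h1 : a - b < 1 := by
    obtain ⟨ha1, ha2⟩ := ha
    obtain ⟨hb1, hb2⟩ := hb
    linarith
  have h2 : -1 < a - b := by
    obtain ⟨ha1, ha2⟩ := ha
    obtain ⟨hb1, hb2⟩ := hb
    linarith
  rw [hm] at h1 h2
  have h3 : m = 0 := by
    have := (by exact_mod_cast h1 : m < (1:ℤ))
    have := (by exact_mod_cast h2 : (-1:ℤ) < m)
    omega
  rw [h3] at hm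
  simpa using sub_eq_zero.1 (by exact_mod_cast hm)

lemma Lf_coe {θ s : ℝ} (hs : s ∈ Set.Ioc θ (θ+1)) : Lf θ ((s:ℝ) : UnitAddCircle) = s :=
  coe_inj_Ioc (Lf_mem θ _) hs (coe_Lf θ _)

lemma Lf_continuousAt {θ : ℝ} {x : UnitAddCircle} (hx : x ≠ ((θ:ℝ) : UnitAddCircle)) :
    ContinuousAt (Lf θ) x :=
  continuous_subtype_val.continuousAt.comp (AddCircle.continuousAt_equivIoc 1 θ hx)

end S6

namespace S6

lemma reverse (d : ℕ) (hd : 2 ≤ d) (K : Set UnitAddCircle)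
    (hKc : IsCompact K) (hinv : Ed d '' K = K)
    (hnw : NonWanderingOn d K)
    (hreg : ∀ x ∈ critVals d K, IsRegularCrit d K x) :
    ∃ η : UnitAddCircle → UnitAddCircle,
      (∀ x, Ed d (η x) = x) ∧ {x | ¬ ContinuousAt η x}.Finite ∧
      K ⊆ closure (Set.range η) := by
  classical
  have hd0 : 0 < d := by omega
  have hfwd : ∀ z ∈ K, Ed d z ∈ K := fun z hz => hinv ▸ ⟨z, hz, rfl⟩
  have hpre : ∀ z ∈ K, ∃ w, w ∈ K ∧ Ed d w = z := by
    intro z hz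
    rw [← hinv] at hz
    obtain ⟨w, hw, he⟩ := hz
    exact ⟨w, hw, he⟩
  have hCfin : (critVals d K).Finite := crit_finite d hd0 K hKc hreg
  obtain ⟨x₀, hx₀⟩ := exists_notin_K d hd K hreg
  obtain ⟨θ, hθ⟩ : ∃ θ : ℝ, ((θ:ℝ) : UnitAddCircle) = x₀ := ⟨Lf 0 x₀, coe_Lf 0 x₀⟩
  obtain ⟨r0, hr00, hball⟩ : ∃ r0 > 0, Metric.ball x₀ r0 ⊆ Kᶜ :=
    Metric.isOpen_iff.1 (hKc.isClosed.isOpen_compl) x₀ hx₀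
  set r : ℝ := min r0 (1/4) with hrdef
  have hrpos : 0 < r := lt_min hr00 (by norm_num)
  have hrq : r ≤ 1/4 := min_le_right _ _
  have hrK : ∀ z ∈ K, r ≤ dist z x₀ := by
    intro z hz
    by_contra h
    push_neg at h
    exact hball (Metric.mem_ball.2 (lt_of_lt_of_le h (min_le_left _ _))) hz
  set Kt : Set ℝ := Lf θ '' K with hKtdef
  have hxθK : ∀ z ∈ K, z ≠ ((θ:ℝ) : UnitAddCircle) := by
    intro z hz he
    rw [hθ] at he
    exact hx₀ (he ▸ hz)
  have hKtc : IsCompact Kt :=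
    hKc.image_of_continuousOn (fun z hz => (Lf_continuousAt (hxθK z hz)).continuousWithinAt)
  have hKtmem : ∀ s ∈ Kt, s ∈ Set.Ioc θ (θ+1) ∧ ((s:ℝ) : UnitAddCircle) ∈ K := by
    rintro s ⟨z, hz, rfl⟩
    exact ⟨Lf_mem θ z, by rw [coe_Lf]; exact hz⟩
  have hKtof : ∀ s ∈ Set.Ioc θ (θ+1), ((s:ℝ) : UnitAddCircle) ∈ K → s ∈ Kt :=
    fun s hs hsK => ⟨_, hsK, Lf_coe hs⟩
  have hKtbd : ∀ s ∈ Kt, θ + r ≤ s ∧ s ≤ θ + 1 - r := by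
    intro s hs
    obtain ⟨hsIoc, hsK⟩ := hKtmem s hs
    have h1 : r ≤ dist ((s:ℝ) : UnitAddCircle) x₀ := hrK _ hsK
    constructor
    · by_contra hlt
      push_neg at hlt
      have he : dist ((s:ℝ) : UnitAddCircle) x₀ = s - θ := by
        rw [← hθ, dist_coe' s θ (by rw [abs_of_pos (by linarith [hsIoc.1])]; linarith [hsIoc.1])]
        rw [abs_of_pos (by linarith [hsIoc.1])]
      rw [he] at h1
      linarith
    · by_contra hlt
      push_neg at hlt
      have hx01 : ((θ + 1 : ℝ) : UnitAddCircle) = x₀ := by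
        rw [← hθ, coe_eq_coe]
        exact ⟨1, by push_cast; ring⟩
      have he : dist ((s:ℝ) : UnitAddCircle) x₀ = (θ+1) - s := by
        rw [← hx01, dist_coe' s (θ+1) (by rw [abs_of_nonpos (by linarith [hsIoc.2])]; linarith)]
        rw [abs_of_nonpos (by linarith [hsIoc.2])]
        ring
      rw [he] at h1
      linarith
  set Ct : Set ℝ := {s : ℝ | s ∈ Kt ∧ ((s:ℝ) : UnitAddCircle) ∈ critVals d K} with hCtdef
  have hCtfin : Ct.Finite := by
    apply (hCfin.image (Lf θ)).subset
    rintro s ⟨hsKt, hsC⟩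
    exact ⟨_, hsC, Lf_coe ((hKtmem s hsKt).1)⟩
  have hCtKt : Ct ⊆ Kt := fun s hs => hs.1
  -- branch selection
  have hsel : ∀ s : ℝ, ∃ p : ℝ × ℤ × ℤ,
      (0 < p.1 ∧ p.1 < r/2) ∧
      (s ∈ Kt →
        (∀ t ∈ Set.Ioo (-p.1) (0:ℝ), (((s + t : ℝ)) : UnitAddCircle) ∈ K →
          wKf d K (((s + t : ℝ)) : UnitAddCircle) = (((s + t + p.2.1) / d : ℝ) : UnitAddCircle)) ∧
        (∀ t ∈ Set.Ioo (0:ℝ) p.1, (((s + t : ℝ)) : UnitAddCircle) ∈ K →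
          wKf d K (((s + t : ℝ)) : UnitAddCircle) = (((s + t + p.2.2) / d : ℝ) : UnitAddCircle)) ∧
        (s ∉ Ct → p.2.1 = p.2.2 ∧
          wKf d K ((s : ℝ) : UnitAddCircle) = (((s + p.2.2) / d : ℝ) : UnitAddCircle))) := by
    intro s
    by_cases hsKt : s ∈ Kt
    · by_cases hsCt : s ∈ Ct
      · obtain ⟨δ, hδ, km, kp, hL, hR⟩ := matchM2 d hd0 K hpre hsCt.2 hreg
        refine ⟨(min δ (r/4), km, kp), ⟨lt_min hδ (by positivity), ?_⟩, fun _ => ⟨?_, ?_, ?_⟩⟩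
        · calc min δ (r/4) ≤ r/4 := min_le_right _ _
          _ < r/2 := by linarith
        · intro t ht hK
          exact hL t ⟨by have := ht.1; have := min_le_left δ (r/4); linarith, ht.2⟩ hK
        · intro t ht hK
          exact hR t ⟨ht.1, lt_of_lt_of_le ht.2 (min_le_left _ _)⟩ hK
        · intro hns
          exact absurd hsCt hns
      · have hsnc : ((s:ℝ) : UnitAddCircle) ∉ critVals d K := fun hc => hsCt ⟨hsKt, hc⟩
        obtain ⟨δ, hδ, k, hk⟩ := matchM1 d hd0 K hKc hpre (hKtmem s hsKt).2 hsnc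
        refine ⟨(min δ (r/4), k, k), ⟨lt_min hδ (by positivity), ?_⟩, fun _ => ⟨?_, ?_, ?_⟩⟩
        · calc min δ (r/4) ≤ r/4 := min_le_right _ _
          _ < r/2 := by linarith
        · intro t ht hK
          apply hk t ?_ hK
          rw [abs_of_neg ht.2]
          have := ht.1
          have := min_le_left δ (r/4)
          linarith
        · intro t ht hK
          apply hk t ?_ hK
          rw [abs_of_pos ht.1]
          exact lt_of_lt_of_le ht.2 (min_le_left _ _)
        · intro _
          refine ⟨rfl, ?_⟩
          have := hk 0 (by rw [abs_zero]; exact hδ) (by rw [add_zero]; exact (hKtmem s hsKt).2)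
          simpa using this
    · exact ⟨(r/4, 0, 0), ⟨by positivity, by linarith⟩, fun h => absurd h hsKt⟩
  choose pf hpf0 hpfP using hsel
  set δf : ℝ → ℝ := fun s => (pf s).1 with hδfdef
  set kmf : ℝ → ℤ := fun s => (pf s).2.1 with hkmfdef
  set kpf : ℝ → ℤ := fun s => (pf s).2.2 with hkpfdef
  have hδfpos : ∀ s, 0 < δf s := fun s => (hpf0 s).1
  -- finite subcover
  have hcov : Kt ⊆ ⋃ s ∈ Kt, Set.Ioo (s - δf s) (s + δf s) := by
    intro s hs
    exact Set.mem_biUnion hs ⟨by linarith [hδfpos s], by linarith [hδfpos s]⟩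
  obtain ⟨b, hbKt, hbfin, hbcov⟩ :=
    hKtc.elim_finite_subcover_image (fun s _ => isOpen_Ioo) hcov
  -- endpoint set
  set bF : Finset ℝ := hbfin.toFinset with hbFdef
  set cF : Finset ℝ := hCtfin.toFinset with hcFdef
  set aF : Finset ℝ := bF ∪ cF with haFdef
  set EF : Finset ℝ := (({θ, θ+1} : Finset ℝ) ∪ aF.image (fun s => s - δf s))
      ∪ (aF.image (fun s => s + δf s) ∪ cF) with hEFdef
  have hEθ : θ ∈ EF := by
    rw [hEFdef]
    simp
  have hEθ1 : θ+1 ∈ EF := by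
    rw [hEFdef]
    simp
  have hEsub : ∀ s₀, (s₀ ∈ b ∨ s₀ ∈ Ct) → s₀ - δf s₀ ∈ EF ∧ s₀ + δf s₀ ∈ EF := by
    intro s₀ hs₀
    have haF : s₀ ∈ aF := by
      rw [haFdef, Finset.mem_union, hbFdef, hcFdef]
      rcases hs₀ with h | h
      · exact Or.inl (hbfin.mem_toFinset.2 h)
      · exact Or.inr (hCtfin.mem_toFinset.2 h)
    constructor
    · rw [hEFdef]
      simp only [Finset.mem_union, Finset.mem_image]
      exact Or.inl (Or.inr ⟨s₀, haF, rfl⟩)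
    · rw [hEFdef]
      simp only [Finset.mem_union, Finset.mem_image]
      exact Or.inr (Or.inl ⟨s₀, haF, rfl⟩)
  have hCtEF : ∀ s₀ ∈ Ct, s₀ ∈ EF := by
    intro s₀ h
    rw [hEFdef]
    simp only [Finset.mem_union]
    exact Or.inr (Or.inr (hCtfin.mem_toFinset.2 h))
  -- the "previous endpoint" function
  have hfilterne : ∀ t : ℝ, θ < t → (EF.filter (fun e => e < t)).Nonempty :=
    fun t ht => ⟨θ, Finset.mem_filter.2 ⟨hEθ, ht⟩⟩
  set cf : ℝ → ℝ := fun t => if h : θ < t then (EF.filter (fun e => e < t)).max'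
      (hfilterne t h) else θ with hcfdef
  have hcf : ∀ t : ℝ, θ < t → cf t ∈ EF ∧ cf t < t ∧ ∀ e ∈ EF, e < t → e ≤ cf t := by
    intro t ht
    have h1 : cf t = (EF.filter (fun e => e < t)).max' (hfilterne t ht) := by
      rw [hcfdef]
      exact dif_pos ht
    have h2 := Finset.max'_mem _ (hfilterne t ht)
    rw [Finset.mem_filter] at h2
    refine ⟨h1 ▸ h2.1, h1 ▸ h2.2, fun e he hlt => ?_⟩
    rw [h1]
    apply Finset.le_max'
    exact Finset.mem_filter.2 ⟨he, hlt⟩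
  have hKtθ : ∀ s ∈ Kt, θ < s := fun s hs => by linarith [(hKtbd s hs).1]
  -- uniform branch per piece
  have hQ : ∀ e : ℝ, ∃ k : ℤ, ∀ s' ∈ Kt, s' ∉ Ct → cf s' = e →
      wKf d K ((s' : ℝ) : UnitAddCircle) = (((s' + k)/d : ℝ) : UnitAddCircle) := by
    intro e
    set S : Set ℝ := {s' | s' ∈ Kt ∧ s' ∉ Ct ∧ cf s' = e} with hSdef
    by_cases hS : S.Nonempty
    swap
    · exact ⟨0, fun s' h1 h2 h3 => absurd rfl
        (fun _ => hS ⟨s', h1, h2, h3⟩ : ¬ (0 = 0))⟩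
    have hSK : S ⊆ Kt := fun s' hs' => hs'.1
    have hbd : BddAbove S := ⟨θ+1, fun s' hs' => by linarith [(hKtbd s' (hSK hs')).2, hrpos]⟩
    set σ : ℝ := sSup S with hσdef
    have hσKt : σ ∈ Kt := by
      have h1 : σ ∈ closure S := csSup_mem_closure hS hbd
      exact (hKtc.isClosed.closure_subset_iff.2 hSK) h1
    have hσle : ∀ s' ∈ S, s' ≤ σ := fun s' hs' => le_csSup hbd hs'
    have hnear : ∀ ρ : ℝ, 0 < ρ → ∃ s' ∈ S, σ - ρ < s' := by
      intro ρ hρ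
      obtain ⟨s', hs', hlt⟩ := exists_lt_of_lt_csSup hS (show σ - ρ < σ by linarith)
      exact ⟨s', hs', hlt⟩
    have hαe : ∀ α ∈ EF, (∃ s' ∈ S, α < s') → α ≤ e := by
      rintro α hα ⟨s', hs', hlt⟩
      have h2 := (hcf s' (hKtθ s' (hSK hs'))).2.2 α hα hlt
      rw [hs'.2.2] at h2
      exact h2
    have hegt : ∀ s' ∈ S, e < s' := by
      intro s' hs'
      have h2 := (hcf s' (hKtθ s' (hSK hs'))).2.1
      rw [hs'.2.2] at h2
      exact h2
    by_cases hσCt : σ ∈ Ct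
    · refine ⟨kmf σ, fun s' hs'Kt hs'Ct hs'cf => ?_⟩
      have hs'S : s' ∈ S := ⟨hs'Kt, hs'Ct, hs'cf⟩
      have hαEF : σ - δf σ ∈ EF := (hEsub σ (Or.inr hσCt)).1
      obtain ⟨sb, hsb, hgt⟩ := hnear (δf σ) (hδfpos σ)
      have hαe' : σ - δf σ ≤ e := hαe _ hαEF ⟨sb, hsb, by linarith⟩
      have hlt1 : s' < σ := lt_of_le_of_ne (hσle s' hs'S) (fun he' => hs'Ct (he' ▸ hσCt))
      have hgt1 : σ - δf σ < s' := lt_of_le_of_lt hαe' (hegt s' hs'S)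
      have hm := ((hpfP σ (hCtKt hσCt)).1) (s' - σ) ⟨by linarith, by linarith⟩
      rw [show σ + (s' - σ) = s' by ring] at hm
      exact hm ((hKtmem s' hs'Kt).2)
    · have hcov' := hbcov hσKt
      rw [Set.mem_iUnion₂] at hcov'
      obtain ⟨s₀, hs₀b, hσIoo⟩ := hcov'
      have hs₀Kt : s₀ ∈ Kt := hbKt hs₀b
      rw [Set.mem_Ioo] at hσIoo
      by_cases hs₀Ct : s₀ ∈ Ct
      · have hσne : σ ≠ s₀ := fun he' => hσCt (he' ▸ hs₀Ct)
        rcases lt_or_gt_of_ne hσne with hσlt | hσgt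
        · refine ⟨kmf s₀, fun s' hs'Kt hs'Ct hs'cf => ?_⟩
          have hs'S : s' ∈ S := ⟨hs'Kt, hs'Ct, hs'cf⟩
          have hαEF : s₀ - δf s₀ ∈ EF := (hEsub s₀ (Or.inr hs₀Ct)).1
          obtain ⟨sb, hsb, hgt⟩ := hnear (σ - (s₀ - δf s₀)) (by linarith [hσIoo.1])
          have hαe' : s₀ - δf s₀ ≤ e := hαe _ hαEF ⟨sb, hsb, by linarith⟩
          have h1 : s₀ - δf s₀ < s' := lt_of_le_of_lt hαe' (hegt s' hs'S)
          have h2 : s' < s₀ := by linarith [hσle s' hs'S]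
          have hm := ((hpfP s₀ hs₀Kt).1) (s' - s₀) ⟨by linarith, by linarith⟩
          rw [show s₀ + (s' - s₀) = s' by ring] at hm
          exact hm ((hKtmem s' hs'Kt).2)
        · refine ⟨kpf s₀, fun s' hs'Kt hs'Ct hs'cf => ?_⟩
          have hs'S : s' ∈ S := ⟨hs'Kt, hs'Ct, hs'cf⟩
          have hαEF : s₀ ∈ EF := hCtEF s₀ hs₀Ct
          obtain ⟨sb, hsb, hgt⟩ := hnear (σ - s₀) (by linarith)
          have hαe' : s₀ ≤ e := hαe _ hαEF ⟨sb, hsb, by linarith⟩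
          have h1 : s₀ < s' := lt_of_le_of_lt hαe' (hegt s' hs'S)
          have h2 : s' < s₀ + δf s₀ := by linarith [hσle s' hs'S, hσIoo.2]
          have hm := ((hpfP s₀ hs₀Kt).2.1) (s' - s₀) ⟨by linarith, by linarith⟩
          rw [show s₀ + (s' - s₀) = s' by ring] at hm
          exact hm ((hKtmem s' hs'Kt).2)
      · refine ⟨kpf s₀, fun s' hs'Kt hs'Ct hs'cf => ?_⟩
        have hs'S : s' ∈ S := ⟨hs'Kt, hs'Ct, hs'cf⟩
        obtain ⟨hkeq, hcen⟩ := (hpfP s₀ hs₀Kt).2.2 hs₀Ct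
        have hαEF : s₀ - δf s₀ ∈ EF := (hEsub s₀ (Or.inl hs₀b)).1
        obtain ⟨sb, hsb, hgt⟩ := hnear (σ - (s₀ - δf s₀)) (by linarith [hσIoo.1])
        have hαe' : s₀ - δf s₀ ≤ e := hαe _ hαEF ⟨sb, hsb, by linarith⟩
        have h1 : s₀ - δf s₀ < s' := lt_of_le_of_lt hαe' (hegt s' hs'S)
        have h2 : s' < s₀ + δf s₀ := by linarith [hσle s' hs'S, hσIoo.2]
        rcases lt_trichotomy s' s₀ with hlt | heq | hgt2
        · have hm := ((hpfP s₀ hs₀Kt).1) (s' - s₀) ⟨by linarith, by linarith⟩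
          rw [show s₀ + (s' - s₀) = s' by ring, hkeq] at hm
          exact hm ((hKtmem s' hs'Kt).2)
        · rw [heq]
          exact hcen
        · have hm := ((hpfP s₀ hs₀Kt).2.1) (s' - s₀) ⟨by linarith, by linarith⟩
          rw [show s₀ + (s' - s₀) = s' by ring] at hm
          exact hm ((hKtmem s' hs'Kt).2)
  choose kQ hkQ using hQ
  -- the selector
  set η : UnitAddCircle → UnitAddCircle := fun x =>
    if x ∈ K then wKf d K x
    else (((Lf θ x + kQ (cf (Lf θ x)))/d : ℝ) : UnitAddCircle) with hηdef
  have hηK : ∀ x ∈ K, η x = wKf d K x := by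
    intro x hx
    rw [hηdef]
    simp only [if_pos hx]
  refine ⟨η, ?_, ?_, ?_⟩
  · -- section property
    intro x
    by_cases hx : x ∈ K
    · rw [hηK x hx]
      exact (wKf_mem (hpre x hx)).2
    · rw [hηdef]
      simp only [if_neg hx]
      rw [ed_branch d hd0 (Lf θ x) _, coe_Lf]
  · -- finitely many discontinuities
    apply Set.Finite.subset (Set.Finite.union
      ((EF.finite_toSet).image (fun t : ℝ => ((t:ℝ) : UnitAddCircle))) hCfin)
    intro x hx
    by_contra hxB
    apply hx
    have hxE : x ∉ (fun t : ℝ => ((t:ℝ) : UnitAddCircle)) '' (EF : Set ℝ) :=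
      fun h => hxB (Set.mem_union_left _ h)
    have hxC : x ∉ critVals d K := fun h => hxB (Set.mem_union_right _ h)
    have hxθ : x ≠ ((θ:ℝ) : UnitAddCircle) := fun h => hxE ⟨θ, by simpa using hEθ, h.symm⟩
    set s : ℝ := Lf θ x with hsdef
    have hsIoc : s ∈ Set.Ioc θ (θ+1) := Lf_mem θ x
    have hsne1 : s ≠ θ + 1 := by
      intro h
      refine hxE ⟨θ+1, by simpa using hEθ1, ?_⟩
      show ((θ+1 : ℝ) : UnitAddCircle) = x
      rw [← h]
      exact coe_Lf θ x
    have hsIoo : s ∈ Set.Ioo θ (θ+1) := ⟨hsIoc.1, lt_of_le_of_ne hsIoc.2 hsne1⟩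
    have hsE : s ∉ EF := by
      intro h
      exact hxE ⟨s, by simpa using h, coe_Lf θ x⟩
    have hEne : (EF.image (fun e => |e - s|)).Nonempty :=
      ⟨|θ - s|, Finset.mem_image.2 ⟨θ, hEθ, rfl⟩⟩
    set ρ : ℝ := (EF.image (fun e => |e - s|)).min' hEne with hρdef
    have hρpos : 0 < ρ := by
      have hρmem := Finset.min'_mem _ hEne
      rw [Finset.mem_image] at hρmem
      obtain ⟨e₀, he₀, he₀ρ⟩ := hρmem
      rw [hρdef, ← he₀ρ, abs_pos]
      intro h0
      apply hsE
      have : s = e₀ := by linarith [sub_eq_zero.1 h0]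
      rw [this]
      exact he₀
    have hρle : ∀ e ∈ EF, ρ ≤ |e - s| :=
      fun e he => Finset.min'_le _ _ (Finset.mem_image.2 ⟨e, he, rfl⟩)
    have hIE : ∀ e ∈ EF, e ∉ Set.Ioo (s-ρ) (s+ρ) := by
      intro e he hmem
      have h1 := hρle e he
      have h2 : |e - s| < ρ := abs_lt.2 ⟨by linarith [hmem.1], by linarith [hmem.2]⟩
      linarith
    have hIsub : Set.Ioo (s-ρ) (s+ρ) ⊆ Set.Ioo θ (θ+1) := by
      intro t ht
      have h1 := hρle θ hEθ
      have h2 := hρle (θ+1) hEθ1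
      rw [abs_of_neg (by linarith [hsIoo.1] : θ - s < 0)] at h1
      rw [abs_of_pos (by linarith [hsIoo.2] : 0 < θ + 1 - s)] at h2
      exact ⟨by linarith [ht.1], by linarith [ht.2]⟩
    have hccf : ∀ t ∈ Set.Ioo (s-ρ) (s+ρ), θ < t ∧ cf t = cf s := by
      intro t ht
      have hθt : θ < t := (hIsub ht).1
      refine ⟨hθt, ?_⟩
      have h1 := hcf t hθt
      have h2 := hcf s (hsIoo.1)
      apply le_antisymm
      · apply h2.2.2 _ h1.1
        have h3 := hIE _ h1.1
        by_contra hgt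
        push_neg at hgt
        exact h3 ⟨by linarith, by linarith [h1.2.1, ht.2]⟩
      · apply h1.2.2 _ h2.1
        have h3 := hIE _ h2.1
        by_contra hge
        push_neg at hge
        exact h3 ⟨by linarith [ht.1], by linarith [h2.2.1]⟩
    set g : UnitAddCircle → UnitAddCircle :=
      fun x' => (((Lf θ x' + kQ (cf s))/d : ℝ) : UnitAddCircle) with hgdef
    have hgc : ContinuousAt g x := by
      apply ContinuousAt.comp continuous_coe.continuousAt
      exact ((Lf_continuousAt hxθ).add continuousAt_const).div_const _
    have hmodel : ∀ x', x' ∉ K → Lf θ x' ∈ Set.Ioo (s-ρ) (s+ρ) → η x' = g x' := by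
      intro x' hx'K hx'
      rw [hηdef]
      simp only [if_neg hx'K]
      rw [hgdef]
      simp only
      rw [(hccf _ hx').2]
    by_cases hxK : x ∈ K
    · have heq : ∀ x' ∈ (Lf θ) ⁻¹' (Set.Ioo (s-ρ) (s+ρ)), η x' = g x' := by
        intro x' hx'
        by_cases hx'K : x' ∈ K
        · rw [hηK x' hx'K, hgdef]
          have hs'Kt : Lf θ x' ∈ Kt :=
            hKtof _ (Set.Ioo_subset_Ioc_self (hIsub hx')) (by rw [coe_Lf]; exact hx'K)
          have hs'Ct : Lf θ x' ∉ Ct := fun hc => hIE _ (hCtEF _ hc) hx'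
          have h5 := hkQ (cf s) (Lf θ x') hs'Kt hs'Ct ((hccf _ hx').2)
          rw [coe_Lf] at h5
          exact h5
        · exact hmodel x' hx'K hx'
      have hUnhds : (Lf θ) ⁻¹' (Set.Ioo (s-ρ) (s+ρ)) ∈ nhds x :=
        (Lf_continuousAt hxθ).preimage_mem_nhds
          (Ioo_mem_nhds (by linarith) (by linarith))
      exact hgc.congr (Filter.eventuallyEq_of_mem hUnhds heq).symm
    · obtain ⟨rx, hrx, hbx⟩ : ∃ rx > 0, Metric.ball x rx ⊆ Kᶜ :=
        Metric.isOpen_iff.1 hKc.isClosed.isOpen_compl x hxK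
      set ρ2 : ℝ := min ρ rx with hρ2def
      have hρ2pos : 0 < ρ2 := lt_min hρpos hrx
      have heq : ∀ x' ∈ (Lf θ) ⁻¹' (Set.Ioo (s-ρ2) (s+ρ2)), η x' = g x' := by
        intro x' hx'
        have hx'big : Lf θ x' ∈ Set.Ioo (s-ρ) (s+ρ) := by
          have h1 : ρ2 ≤ ρ := min_le_left _ _
          exact ⟨by linarith [Set.mem_preimage.1 hx' |>.1], by linarith [Set.mem_preimage.1 hx' |>.2]⟩
        have hx'K : x' ∉ K := by
          intro hmem
          apply hbx ?_ hmem
          rw [Metric.mem_ball]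
          have h1 : x' = ((Lf θ x' : ℝ) : UnitAddCircle) := (coe_Lf θ x').symm
          have h2 : x = ((s : ℝ) : UnitAddCircle) := by rw [hsdef, coe_Lf]
          rw [h1, h2]
          calc dist (((Lf θ x' : ℝ) : UnitAddCircle)) (((s : ℝ) : UnitAddCircle))
              ≤ |Lf θ x' - s| := dist_coe_le _ _
          _ < ρ2 := abs_lt.2 ⟨by linarith [Set.mem_preimage.1 hx' |>.1],
              by linarith [Set.mem_preimage.1 hx' |>.2]⟩
          _ ≤ rx := min_le_right _ _
        exact hmodel x' hx'K hx'big
      have hUnhds : (Lf θ) ⁻¹' (Set.Ioo (s-ρ2) (s+ρ2)) ∈ nhds x :=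
        (Lf_continuousAt hxθ).preimage_mem_nhds
          (Ioo_mem_nhds (by linarith) (by linarith))
      exact hgc.congr (Filter.eventuallyEq_of_mem hUnhds heq).symm
  · -- coverage
    intro w hwK
    have hzK : Ed d w ∈ K := hfwd w hwK
    by_cases hzC : Ed d w ∈ critVals d K
    · rcases nonwandering_cover d hd0 K hfwd hnw hreg hzC hwK rfl with hR | hper
      · apply closure_mono ?_ hR
        rintro v ⟨z', hz', rfl⟩
        exact ⟨z', (hηK z' hz'.1).symm ▸ rfl⟩
      · apply subset_closure
        refine ⟨Ed d w, ?_⟩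
        rw [hηK _ hzK]
        exact wKf_per hwK rfl hper
    · apply subset_closure
      refine ⟨Ed d w, ?_⟩
      rw [hηK _ hzK]
      exact wKf_uniq hzK hzC hwK rfl

end S6

theorem stmt6 (d : ℕ) (hd : 2 ≤ d) (K : Set UnitAddCircle)
    (hKne : K.Nonempty) (hKc : IsCompact K) (hinv : Ed d '' K = K)
    (hnw : NonWanderingOn d K) :
    (∃ η : UnitAddCircle → UnitAddCircle,
        IsPreimageSelector d η ∧ K ⊆ closure (Set.range η)) ↔
    (∀ x ∈ critVals d K, IsRegularCrit d K x) := by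
  constructor
  · rintro ⟨η, hη, hcl⟩
    exact S6.forward d K hinv η hη hcl
  · intro hreg
    obtain ⟨η, h1, h2, h3⟩ := S6.reverse d hd K hKc hinv hnw hreg
    exact ⟨η, ⟨h1, h2⟩, h3⟩
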